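/- arXiv:2102.02739 — 9 statements merged into one kernel-verified Lean document; each statement's English description precedes it below -/
import Mathlib

section
/- The monoid generated by the matrices S and G inside SL(3,ℤ) is free on the two generators S and G; that is, two distinct words in the letters S and G yield distinct matrix products. -/
/-- `true` encodes the letter `S`, `false` encodes the letter `G`. -/
def SGletter : Bool → Matrix (Fin 3) (Fin 3) ℤ
  | true => !![3, -2, 1; 2, -1, 1; 0, 0, 1]
  | false => !![1, 1, 0; 0, 1, 0; 0, 0, 1]

namespace SGaux

def vx (M : Matrix (Fin 3) (Fin 3) ℤ) : ℤ := M 0 0 + M 0 1 + M 0 2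
def vy (M : Matrix (Fin 3) (Fin 3) ℤ) : ℤ := M 1 0 + M 1 1 + M 1 2
def vz (M : Matrix (Fin 3) (Fin 3) ℤ) : ℤ := M 2 0 + M 2 1 + M 2 2

lemma vx_S (M : Matrix (Fin 3) (Fin 3) ℤ) :
    vx (SGletter true * M) = 3 * vx M - 2 * vy M + vz M := by
  simp [vx, vy, vz, SGletter, Matrix.mul_apply, Fin.sum_univ_three]; ring

lemma vy_S (M : Matrix (Fin 3) (Fin 3) ℤ) :
    vy (SGletter true * M) = 2 * vx M - vy M + vz M := by
  simp [vx, vy, vz, SGletter, Matrix.mul_apply, Fin.sum_univ_three]; ring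

lemma vz_S (M : Matrix (Fin 3) (Fin 3) ℤ) :
    vz (SGletter true * M) = vz M := by
  simp [vz, SGletter, Matrix.mul_apply, Fin.sum_univ_three]

lemma vx_G (M : Matrix (Fin 3) (Fin 3) ℤ) :
    vx (SGletter false * M) = vx M + vy M := by
  simp [vx, vy, SGletter, Matrix.mul_apply, Fin.sum_univ_three]; ring

lemma vy_G (M : Matrix (Fin 3) (Fin 3) ℤ) :
    vy (SGletter false * M) = vy M := by
  simp [vy, SGletter, Matrix.mul_apply, Fin.sum_univ_three]

lemma vz_G (M : Matrix (Fin 3) (Fin 3) ℤ) :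
    vz (SGletter false * M) = vz M := by
  simp [vz, SGletter, Matrix.mul_apply, Fin.sum_univ_three]

lemma vx_one : vx (1 : Matrix (Fin 3) (Fin 3) ℤ) = 1 := by
  simp [vx, Matrix.one_apply]
lemma vy_one : vy (1 : Matrix (Fin 3) (Fin 3) ℤ) = 1 := by
  simp [vy, Matrix.one_apply]
lemma vz_one : vz (1 : Matrix (Fin 3) (Fin 3) ℤ) = 1 := by
  simp [vz, Matrix.one_apply]

lemma key : ∀ w : List Bool,
    vz ((w.map SGletter).prod) = 1 ∧
    1 ≤ vy ((w.map SGletter).prod) ∧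
    vy ((w.map SGletter).prod) ≤ vx ((w.map SGletter).prod) ∧
    (∀ t, w = true :: t →
      2 * (vx ((w.map SGletter).prod) - vy ((w.map SGletter).prod)) + 2
        ≤ vy ((w.map SGletter).prod)) ∧
    (∀ t, w = false :: t →
      vy ((w.map SGletter).prod)
        ≤ vx ((w.map SGletter).prod) - vy ((w.map SGletter).prod)) := by
  intro w
  induction w with
  | nil => simp [vx_one, vy_one, vz_one]
  | cons a t ih =>
    obtain ⟨hz, hy, hxy, _, _⟩ := ih
    cases a with
    | true =>
      simp only [List.map_cons, List.prod_cons, vx_S, vy_S, vz_S]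
      refine ⟨by omega, by omega, by omega, fun t' ht' => by omega, fun t' ht' => by simp at ht'⟩
    | false =>
      simp only [List.map_cons, List.prod_cons, vx_G, vy_G, vz_G]
      refine ⟨by omega, by omega, by omega, fun t' ht' => by simp at ht', fun t' ht' => by omega⟩

lemma cancel (a : Bool) (p p' : Matrix (Fin 3) (Fin 3) ℤ)
    (h : SGletter a * p = SGletter a * p') : p = p' := by
  have hN : ∃ N : Matrix (Fin 3) (Fin 3) ℤ, N * SGletter a = 1 := by
    cases a with
    | true =>
      refine ⟨!![-1, 2, -1; -2, 3, -1; 0, 0, 1], ?_⟩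
      ext i j
      fin_cases i <;> fin_cases j <;>
        simp [SGletter, Matrix.mul_apply, Fin.sum_univ_three, Matrix.one_apply, Matrix.vecHead, Matrix.vecTail]
    | false =>
      refine ⟨!![1, -1, 0; 0, 1, 0; 0, 0, 1], ?_⟩
      ext i j
      fin_cases i <;> fin_cases j <;>
        simp [SGletter, Matrix.mul_apply, Fin.sum_univ_three, Matrix.one_apply, Matrix.vecHead, Matrix.vecTail]
  obtain ⟨N, hN⟩ := hN
  calc p = (N * SGletter a) * p := by rw [hN, one_mul]
    _ = N * (SGletter a * p) := by rw [Matrix.mul_assoc]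
    _ = N * (SGletter a * p') := by rw [h]
    _ = (N * SGletter a) * p' := by rw [Matrix.mul_assoc]
    _ = p' := by rw [hN, one_mul]

end SGaux

open SGaux in
theorem monoid_free_on_S_G :
    ∀ w w' : List Bool, (w.map SGletter).prod = (w'.map SGletter).prod → w = w' := by
  intro w
  induction w with
  | nil =>
    intro w' h
    cases w' with
    | nil => rfl
    | cons b t =>
      exfalso
      obtain ⟨hz, hy, hxy, hS, hG⟩ := key (b :: t)
      rw [← h] at hz hy hxy hS hG
      simp only [List.map_nil, List.prod_nil, vx_one, vy_one, vz_one] at hS hG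
      cases b with
      | true => have := hS t rfl; omega
      | false => have := hG t rfl; omega
  | cons a t ih =>
    intro w' h
    cases w' with
    | nil =>
      exfalso
      obtain ⟨hz, hy, hxy, hS, hG⟩ := key (a :: t)
      rw [h] at hz hy hxy hS hG
      simp only [List.map_nil, List.prod_nil, vx_one, vy_one, vz_one] at hS hG
      cases a with
      | true => have := hS t rfl; omega
      | false => have := hG t rfl; omega
    | cons b t' =>
      have hab : a = b := by
        by_contra hne
        obtain ⟨hz1, hy1, hxy1, hS1, hG1⟩ := key (a :: t)
        obtain ⟨hz2, hy2, hxy2, hS2, hG2⟩ := key (b :: t')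
        rw [← h] at hS2 hG2 hy2 hxy2
        cases a with
        | true =>
          have hb : b = false := by cases b <;> simp_all
          have h1 := hS1 t rfl
          have h2 := hG2 t' (by rw [hb])
          omega
        | false =>
          have hb : b = true := by cases b <;> simp_all
          have h1 := hG1 t rfl
          have h2 := hS2 t' (by rw [hb])
          omega
      subst hab
      simp only [List.map_cons, List.prod_cons] at h
      have := cancel a _ _ h
      rw [ih t' this]
end

section
/- With G and S as the affine maps Ĝ(x,y)=(x+y,y) and Ŝ(x,y)=(3x−2y+1,2x−y+1) on ℝ², and X₁ = {(x,y) : x > −1/2, 0 < y < x/2 + 1/4}, X₂ = {(x,y) : x > −1/2, 2x/3 + 1/3 < y < x + 1/2}, one has X₁ ∩ X₂ = ∅, Ĝ(X₁ ∪ X₂) ⊆ X₁, and Ŝ(X₁ ∪ X₂) ⊆ X₂. -/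
def GhatR (p : ℝ × ℝ) : ℝ × ℝ := (p.1 + p.2, p.2)

def ShatR (p : ℝ × ℝ) : ℝ × ℝ := (3 * p.1 - 2 * p.2 + 1, 2 * p.1 - p.2 + 1)

def X1 : Set (ℝ × ℝ) := {p | p.1 > -1/2 ∧ 0 < p.2 ∧ p.2 < p.1 / 2 + 1/4}

def X2 : Set (ℝ × ℝ) := {p | p.1 > -1/2 ∧ 2 * p.1 / 3 + 1/3 < p.2 ∧ p.2 < p.1 + 1/2}

theorem ping_pong_sets :
    X1 ∩ X2 = ∅ ∧ GhatR '' (X1 ∪ X2) ⊆ X1 ∧ ShatR '' (X1 ∪ X2) ⊆ X2 := by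
  refine ⟨?_, ?_, ?_⟩
  · ext ⟨x, y⟩
    simp only [Set.mem_inter_iff, Set.mem_empty_iff_false, iff_false, X1, X2, Set.mem_setOf_eq]
    rintro ⟨⟨h1, h2, h3⟩, ⟨h4, h5, h6⟩⟩
    nlinarith
  · rintro q ⟨⟨x, y⟩, hp | hp, rfl⟩ <;>
      obtain ⟨h1, h2, h3⟩ := hp <;>
      exact ⟨by simp [GhatR]; nlinarith, by simp [GhatR]; nlinarith, by simp [GhatR]; nlinarith⟩
  · rintro q ⟨⟨x, y⟩, hp | hp, rfl⟩ <;>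
      obtain ⟨h1, h2, h3⟩ := hp <;>
      exact ⟨by simp [ShatR]; nlinarith, by simp [ShatR]; nlinarith, by simp [ShatR]; nlinarith⟩
end

section
/- For every natural number i ≥ 0, (SG)ⁱ = [[a(i), b(i), c(i)],[d(i), a(i−1), b(i)],[0,0,1]], where a, b, d satisfy the recurrence u(n) = 4u(n−1) − u(n−2) with a(0)=1, a(1)=3, b(0)=0, b(1)=1, d(0)=0, d(1)=2 (and a(−1)=1), and c satisfies c(n) = 5c(n−1) − 5c(n−2) + c(n−3) with c(1)=1 and c(k)=0 for k ≤ 0. -/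
theorem SG_pow_formula (a b c d : ℤ → ℤ)
    (ha : ∀ n : ℤ, 2 ≤ n → a n = 4 * a (n - 1) - a (n - 2))
    (ha0 : a 0 = 1) (ha1 : a 1 = 3) (haneg : a (-1) = 1)
    (hb : ∀ n : ℤ, 2 ≤ n → b n = 4 * b (n - 1) - b (n - 2))
    (hb0 : b 0 = 0) (hb1 : b 1 = 1)
    (hd : ∀ n : ℤ, 2 ≤ n → d n = 4 * d (n - 1) - d (n - 2))
    (hd0 : d 0 = 0) (hd1 : d 1 = 2)
    (hc : ∀ n : ℤ, 2 ≤ n → c n = 5 * c (n - 1) - 5 * c (n - 2) + c (n - 3))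
    (hc1 : c 1 = 1) (hc0 : ∀ k : ℤ, k ≤ 0 → c k = 0) :
    ∀ i : ℕ,
      ((!![3, -2, 1; 2, -1, 1; 0, 0, 1] : Matrix (Fin 3) (Fin 3) ℤ) *
        (!![1, 1, 0; 0, 1, 0; 0, 0, 1] : Matrix (Fin 3) (Fin 3) ℤ)) ^ i =
      !![a i, b i, c i;
         d i, a ((i : ℤ) - 1), b i;
         0, 0, 1] := by
  have key : ∀ n : ℕ,
      a ((n:ℤ)+1) = 3 * a n + 2 * b n ∧
      b ((n:ℤ)+1) = a n + b n ∧
      d (n:ℤ) = 2 * b n ∧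
      d ((n:ℤ)+1) = 2 * b ((n:ℤ)+1) ∧
      a ((n:ℤ)-1) = a n - 2 * b n ∧
      c ((n:ℤ)+1) = a n + b n + c n ∧
      c ((n:ℤ)+2) = a ((n:ℤ)+1) + b ((n:ℤ)+1) + c ((n:ℤ)+1) ∧
      c ((n:ℤ)+3) = a ((n:ℤ)+2) + b ((n:ℤ)+2) + c ((n:ℤ)+2) := by
    intro n
    induction n with
    | zero =>
      have hc2 := hc 2 (by norm_num)
      have hc3 := hc 3 (by norm_num)
      have ha2 := ha 2 (by norm_num)
      have hb2 := hb 2 (by norm_num)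
      have hcm1 := hc0 (-1) (by norm_num)
      have hcz := hc0 0 (by norm_num)
      norm_num at *
      refine ⟨?_, ?_, ?_, ?_, ?_, ?_, ?_, ?_⟩ <;> linarith
    | succ k ih =>
      obtain ⟨h1, h2, h3, h4, h5, h6, h7, h8⟩ := ih
      have ha2 := ha ((k:ℤ)+2) (by linarith [Int.ofNat_nonneg k])
      have ha3 := ha ((k:ℤ)+3) (by linarith [Int.ofNat_nonneg k])
      have hb2 := hb ((k:ℤ)+2) (by linarith [Int.ofNat_nonneg k])
      have hb3 := hb ((k:ℤ)+3) (by linarith [Int.ofNat_nonneg k])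
      have hd2 := hd ((k:ℤ)+2) (by linarith [Int.ofNat_nonneg k])
      have hc4 := hc ((k:ℤ)+4) (by linarith [Int.ofNat_nonneg k])
      push_cast
      ring_nf at *
      refine ⟨?_, ?_, ?_, ?_, ?_, ?_, ?_, ?_⟩ <;> linarith
  intro i
  induction i with
  | zero =>
    have h0 := hc0 0 (by norm_num)
    simp only [pow_zero, Nat.cast_zero]
    ext r s
    fin_cases r <;> fin_cases s <;>
      simp [Matrix.one_apply, Matrix.vecHead, Matrix.vecTail, ha0, hb0, hd0, h0, haneg]
  | succ k ih =>
    obtain ⟨h1, h2, h3, h4, h5, h6, h7, h8⟩ := key k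
    rw [pow_succ, ih, Matrix.mul_fin_three, Matrix.mul_fin_three]
    ext r s
    fin_cases r <;> fin_cases s <;>
      · push_cast
        simp
        try (ring_nf; ring_nf at h1 h2 h3 h4 h5 h6; linarith)
end

section
/- Let F : ℕ × ℕ → ℕ be the matrix defined by: F(n,k) > 0 with n,k ≥ 1 if and only if (n,k) is reachable from (1,1) by finitely many applications of the maps (x,y) ↦ (x+y, y) and (x,y) ↦ (3x−2y+1, 2x−y+1), together with F(0,0)=1. Then F is a 0–1 matrix, i.e., F(n,k) ∈ {0,1} for all n,k, where F(n,k) counts the number of such words reaching (n,k). -/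
def Ghat (p : ℤ × ℤ) : ℤ × ℤ := (p.1 + p.2, p.2)

def Shat (p : ℤ × ℤ) : ℤ × ℤ := (3 * p.1 - 2 * p.2 + 1, 2 * p.1 - p.2 + 1)

/-- `true` encodes `Ŝ`, `false` encodes `Ĝ`; a word acts by composition. -/
def applyWord (w : List Bool) (p : ℤ × ℤ) : ℤ × ℤ :=
  w.foldr (fun b q => if b then Shat q else Ghat q) p

lemma applyWord_cons (b : Bool) (w : List Bool) (p : ℤ × ℤ) :
    applyWord (b :: w) p = if b then Shat (applyWord w p) else Ghat (applyWord w p) := rfl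

lemma inv_applyWord (w : List Bool) :
    1 ≤ (applyWord w (1, 1)).2 ∧ (applyWord w (1, 1)).2 ≤ (applyWord w (1, 1)).1 := by
  induction w with
  | nil => simp [applyWord]
  | cons b w ih =>
    rw [applyWord_cons]
    cases b <;> simp only [if_true, if_false, Ghat, Shat, Bool.false_eq_true] <;> omega

lemma word_inj : ∀ w1 w2 : List Bool,
    applyWord w1 (1, 1) = applyWord w2 (1, 1) → w1 = w2 := by
  intro w1
  induction w1 with
  | nil =>
    intro w2 h
    cases w2 with
    | nil => rfl
    | cons b w =>
      exfalso
      have hi := inv_applyWord w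
      rw [applyWord_cons] at h
      have h0 : applyWord ([] : List Bool) (1, 1) = ((1 : ℤ), (1 : ℤ)) := rfl
      rw [h0] at h
      have h1 := congrArg Prod.fst h
      cases b <;> simp only [if_true, if_false, Ghat, Shat, Bool.false_eq_true, Prod.fst] at h1 <;> omega
  | cons b1 w1 ih =>
    intro w2 h
    cases w2 with
    | nil =>
      exfalso
      have hi := inv_applyWord w1
      rw [applyWord_cons] at h
      have h0 : applyWord ([] : List Bool) (1, 1) = ((1 : ℤ), (1 : ℤ)) := rfl
      rw [h0] at h
      have h1 := congrArg Prod.fst h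
      cases b1 <;> simp only [if_true, if_false, Ghat, Shat, Bool.false_eq_true, Prod.fst] at h1 <;> omega
    | cons b2 w2 =>
      have hi1 := inv_applyWord w1
      have hi2 := inv_applyWord w2
      rw [applyWord_cons, applyWord_cons] at h
      set p := applyWord w1 (1, 1) with hp
      set q := applyWord w2 (1, 1) with hq
      have hbb : b1 = b2 := by
        cases b1 <;> cases b2 <;> simp [Ghat, Shat, Prod.ext_iff] at h <;> first
          | rfl
          | (exfalso; omega)
      subst hbb
      have hpq : p = q := by
        cases b1 <;> simp [Ghat, Shat, Prod.ext_iff] at h ⊢ <;>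
          · constructor <;> omega
      rw [ih w2 hpq]

lemma card_fiber (p : ℤ × ℤ) :
    Nat.card {w : List Bool // applyWord w (1, 1) = p} = 0 ∨
    Nat.card {w : List Bool // applyWord w (1, 1) = p} = 1 := by
  have hsub : Subsingleton {w : List Bool // applyWord w (1, 1) = p} := by
    constructor
    rintro ⟨w1, h1⟩ ⟨w2, h2⟩
    exact Subtype.ext (word_inj w1 w2 (by rw [h1, h2]))
  rcases isEmpty_or_nonempty {w : List Bool // applyWord w (1, 1) = p} with he | hne
  · left; exact Nat.card_of_isEmpty
  · right
    obtain ⟨a⟩ := hne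
    exact @Nat.card_of_subsingleton _ a hsub

theorem F_is_zero_one (F : ℕ → ℕ → ℕ)
    (hpos : ∀ n k : ℕ, 1 ≤ n → 1 ≤ k →
      F n k = Nat.card {w : List Bool // applyWord w (1, 1) = ((n : ℤ), (k : ℤ))})
    (h00 : F 0 0 = 1)
    (h0k : ∀ k : ℕ, 1 ≤ k → F 0 k = 0)
    (hn0 : ∀ n : ℕ, 1 ≤ n → F n 0 = 0) :
    ∀ n k : ℕ, F n k = 0 ∨ F n k = 1 := by
  intro n k
  match n, k with
  | 0, 0 => right; exact h00
  | 0, k + 1 => left; exact h0k (k + 1) (Nat.succ_le_succ (Nat.zero_le k))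
  | n + 1, 0 => left; exact hn0 (n + 1) (Nat.succ_le_succ (Nat.zero_le n))
  | n + 1, k + 1 =>
    rw [hpos (n + 1) (k + 1) (Nat.succ_le_succ (Nat.zero_le n)) (Nat.succ_le_succ (Nat.zero_le k))]
    exact card_fiber _
end

section
/- For all integers n ≥ 1 and k ≥ 1, if k divides n then F(n,k) = 1, i.e., the point (n,k) is reachable from (1,1) under the maps (x,y) ↦ (x+y, y) and (x,y) ↦ (3x−2y+1, 2x−y+1). -/
/-- `(n,k)` is reachable from `(1,1)` by some word in `Ĝ, Ŝ`. -/
def Reachable (p : ℤ × ℤ) : Prop := ∃ w : List Bool, applyWord w (1, 1) = p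

lemma applyWord_append (u v : List Bool) (p : ℤ × ℤ) :
    applyWord (u ++ v) p = applyWord u (applyWord v p) := by
  simp [applyWord, List.foldr_append]

lemma applyWord_true (m : ℕ) :
    applyWord (List.replicate m true) (1, 1) = (1 + (m:ℤ), 1 + (m:ℤ)) := by
  induction m with
  | zero => simp [applyWord]
  | succ m ih =>
    rw [List.replicate_succ, applyWord_cons, ih]
    simp [Shat]
    constructor <;> ring

lemma applyWord_false (m : ℕ) (x y : ℤ) :
    applyWord (List.replicate m false) (x, y) = (x + (m:ℤ) * y, y) := by
  induction m with
  | zero => simp [applyWord]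
  | succ m ih =>
    rw [List.replicate_succ, applyWord_cons, ih]
    simp [Ghat]
    ring

theorem divisor_reachable (n k : ℤ) (hn : 1 ≤ n) (hk : 1 ≤ k) (hdvd : k ∣ n) :
    Reachable (n, k) := by
  obtain ⟨q, hq⟩ := hdvd
  have hq1 : 1 ≤ q := by nlinarith
  refine ⟨List.replicate (q - 1).toNat false ++ List.replicate (k - 1).toNat true, ?_⟩
  rw [applyWord_append, applyWord_true, applyWord_false]
  have h1 : (1 : ℤ) + ((k - 1).toNat : ℤ) = k := by omega
  have h2 : ((q - 1).toNat : ℤ) = q - 1 := by omega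
  rw [h1, h2]
  have : k + (q - 1) * k = n := by nlinarith
  rw [this]
end

section
/- For every n ≥ 1, the number a(n) of integers x with 0 ≤ x ≤ n−1 admitting a divisor h of x with (2x+1) | (2n−2h+1) (counting x = 0) satisfies a(n) ≥ τ(n) + τ(2n−1) + τ_o(n+1) − 3 − [n ≡ 0 mod 2] − [n ≡ −1 mod 3], where τ is the number-of-divisors function, τ_o counts odd divisors, and the brackets are indicator functions. -/
open Finset

open Classical in
/-- `a(n)`: one (for `x = 0`) plus the number of `1 ≤ x ≤ n-1` admitting a divisor
`h ≥ 1` of `x` with `2x+1 ∣ 2n-2h+1`. -/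
noncomputable def A (n : ℕ) : ℕ :=
  1 + ((Finset.Ioo 0 n).filter
    (fun x => ∃ h ∈ Finset.Icc 1 x, h ∣ x ∧ (2 * x + 1) ∣ (2 * n - 2 * h + 1))).card

theorem A_lower_bound (n : ℕ) (hn : 1 ≤ n) :
    (A n : ℤ) ≥ (n.divisors.card : ℤ) + ((2 * n - 1).divisors.card : ℤ) +
      (((n + 1).divisors.filter (fun d => Odd d)).card : ℤ) - 3 -
      (if n % 2 = 0 then 1 else 0) - (if n % 3 = 2 then 1 else 0) := by
  classical
  set S : Finset ℕ := (Finset.Ioo 0 n).filter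
    (fun x => ∃ h ∈ Finset.Icc 1 x, h ∣ x ∧ (2 * x + 1) ∣ (2 * n - 2 * h + 1)) with hSdef
  have hA : A n = 1 + S.card := by
    unfold A
    congr 1
    rw [hSdef]
    congr 1
    apply Finset.filter_congr_decidable
  set F3 : Finset ℕ := (n.divisors.erase n).image (fun d => n - d) with hF3def
  set F2 : Finset ℕ := ((2 * n - 1).divisors.erase 1).image (fun d => (d - 1) / 2) with hF2def
  set F1 : Finset ℕ := (((n + 1).divisors.filter (fun d => Odd d)).erase 1).image
      (fun d => (d - 1) / 2) with hF1def
  -- facts extracted from membership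
  have hmem3 : ∀ x ∈ F3, ∃ d, d ∣ n ∧ 2 * d ≤ n ∧ 1 ≤ d ∧ x = n - d := by
    intro x hx
    obtain ⟨d, hd, rfl⟩ := Finset.mem_image.mp hx
    rw [Finset.mem_erase, Nat.mem_divisors] at hd
    obtain ⟨hne, hdvd, -⟩ := hd
    obtain ⟨k, hk⟩ := hdvd
    have hd0 : d ≠ 0 := by rintro rfl; simp at hk; omega
    have hk0 : k ≠ 0 := by rintro rfl; simp at hk; omega
    have hk1 : k ≠ 1 := by rintro rfl; simp at hk; omega
    have h2d : 2 * d ≤ n := by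
      have := Nat.mul_le_mul_left d (show 2 ≤ k by omega)
      omega
    exact ⟨d, ⟨k, hk⟩, h2d, by omega, rfl⟩
  have hodd2n : ∀ d, d ∈ (2 * n - 1).divisors.erase 1 → d % 2 = 1 := by
    intro d hd
    rw [Finset.mem_erase, Nat.mem_divisors] at hd
    rcases Nat.even_or_odd d with h | h
    · obtain ⟨k, hk⟩ := h
      have h2d : (2 : ℕ) ∣ d := ⟨k, by omega⟩
      have h2 : (2 : ℕ) ∣ 2 * n - 1 := h2d.trans hd.2.1
      omega
    · obtain ⟨k, hk⟩ := h
      omega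
  have hmem2 : ∀ x ∈ F2, (2 * x + 1) ∣ (2 * n - 1) ∧ 1 ≤ x := by
    intro x hx
    obtain ⟨d, hd, rfl⟩ := Finset.mem_image.mp hx
    have hodd : d % 2 = 1 := hodd2n d hd
    rw [Finset.mem_erase, Nat.mem_divisors] at hd
    obtain ⟨hne, hdvd, hpos⟩ := hd
    have heq : 2 * ((d - 1) / 2) + 1 = d := by omega
    rw [heq]
    exact ⟨hdvd, by omega⟩
  have hmem1 : ∀ x ∈ F1, (2 * x + 1) ∣ (n + 1) ∧ 1 ≤ x := by
    intro x hx
    obtain ⟨d, hd, rfl⟩ := Finset.mem_image.mp hx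
    rw [Finset.mem_erase, Finset.mem_filter, Nat.mem_divisors] at hd
    obtain ⟨hne, ⟨hdvd, -⟩, hodd⟩ := hd
    obtain ⟨k, hk⟩ := hodd
    have heq : 2 * ((d - 1) / 2) + 1 = d := by omega
    rw [heq]
    exact ⟨hdvd, by omega⟩
  -- subset proofs
  have h3S : F3 ⊆ S := by
    intro x hx
    obtain ⟨d, hdvd, h2d, hd1, rfl⟩ := hmem3 x hx
    rw [hSdef, Finset.mem_filter, Finset.mem_Ioo]
    refine ⟨⟨by omega, by omega⟩, d, Finset.mem_Icc.mpr ⟨hd1, by omega⟩,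
      Nat.dvd_sub hdvd dvd_rfl, ?_⟩
    have heq : 2 * n - 2 * d + 1 = 2 * (n - d) + 1 := by omega
    rw [heq]
  have h2S : F2 ⊆ S := by
    intro x hx
    obtain ⟨hdvd, hx1⟩ := hmem2 x hx
    have hxn : x ≤ n - 1 := by
      have := Nat.le_of_dvd (by omega) hdvd
      omega
    rw [hSdef, Finset.mem_filter, Finset.mem_Ioo]
    refine ⟨⟨by omega, by omega⟩, 1, Finset.mem_Icc.mpr ⟨le_refl 1, hx1⟩, one_dvd _, ?_⟩
    have heq : 2 * n - 2 * 1 + 1 = 2 * n - 1 := by omega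
    rw [heq]
    exact hdvd
  have h1S : F1 ⊆ S := by
    intro x hx
    obtain ⟨hdvd, hx1⟩ := hmem1 x hx
    have hle : 2 * x + 1 ≤ n + 1 := Nat.le_of_dvd (by omega) hdvd
    rw [hSdef, Finset.mem_filter, Finset.mem_Ioo]
    refine ⟨⟨by omega, by omega⟩, x, Finset.mem_Icc.mpr ⟨hx1, le_refl x⟩, dvd_rfl, ?_⟩
    have h2 : (2 * x + 1) ∣ 2 * (n + 1) := Dvd.dvd.mul_left hdvd 2
    have h3 : (2 * x + 1) ∣ (2 * (n + 1) - (2 * x + 1)) := Nat.dvd_sub h2 dvd_rfl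
    have heq : 2 * n - 2 * x + 1 = 2 * (n + 1) - (2 * x + 1) := by omega
    rw [heq]
    exact h3
  -- cardinalities
  have hc3 : F3.card = n.divisors.card - 1 := by
    rw [hF3def, Finset.card_image_of_injOn, Finset.card_erase_of_mem
      (Nat.mem_divisors_self n (by omega))]
    intro a ha b hb hab
    rw [Finset.mem_coe, Finset.mem_erase, Nat.mem_divisors] at ha hb
    have ha' := Nat.le_of_dvd (by omega) ha.2.1
    have hb' := Nat.le_of_dvd (by omega) hb.2.1
    simp only at hab
    omega
  have hc2 : F2.card = (2 * n - 1).divisors.card - 1 := by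
    rw [hF2def, Finset.card_image_of_injOn, Finset.card_erase_of_mem
      (Nat.one_mem_divisors.mpr (by omega))]
    intro a ha b hb hab
    have h1 := hodd2n a (Finset.mem_coe.mp ha)
    have h2 := hodd2n b (Finset.mem_coe.mp hb)
    simp only at hab
    omega
  have hc1 : F1.card = ((n + 1).divisors.filter (fun d => Odd d)).card - 1 := by
    have h1mem : (1 : ℕ) ∈ (n + 1).divisors.filter (fun d => Odd d) := by
      rw [Finset.mem_filter, Nat.mem_divisors]
      exact ⟨⟨one_dvd _, by omega⟩, odd_one⟩
    rw [hF1def, Finset.card_image_of_injOn, Finset.card_erase_of_mem h1mem]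
    intro a ha b hb hab
    rw [Finset.mem_coe, Finset.mem_erase, Finset.mem_filter] at ha hb
    obtain ⟨k, hk⟩ := ha.2.2
    obtain ⟨l, hl⟩ := hb.2.2
    simp only at hab
    omega
  -- intersection bounds
  have hi23 : (F2 ∩ F3).card ≤ 1 := by
    have hsub : F2 ∩ F3 ⊆ {n - 1} := by
      intro x hx
      rw [Finset.mem_inter] at hx
      obtain ⟨hdvd, hx1⟩ := hmem2 x hx.1
      obtain ⟨d, hd, h2d, hd1, hxd⟩ := hmem3 x hx.2
      have hxge : n + 1 ≤ 2 * x + 1 := by omega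
      obtain ⟨k, hk⟩ := hdvd
      have hk0 : k ≠ 0 := by rintro rfl; simp at hk; omega
      have hklt : k < 2 := by
        by_contra hcon
        push_neg at hcon
        have := Nat.mul_le_mul hxge hcon
        omega
      have hk1 : k = 1 := by omega
      subst hk1
      simp only [mul_one] at hk
      rw [Finset.mem_singleton]
      omega
    calc (F2 ∩ F3).card ≤ ({n - 1} : Finset ℕ).card := Finset.card_le_card hsub
      _ = 1 := Finset.card_singleton _
  have hi13 : (F1 ∩ F3).card ≤ if n % 2 = 0 then 1 else 0 := by
    have key : ∀ x ∈ F1 ∩ F3, x = n / 2 ∧ n % 2 = 0 := by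
      intro x hx
      rw [Finset.mem_inter] at hx
      obtain ⟨hdvd, hx1⟩ := hmem1 x hx.1
      obtain ⟨d, hd, h2d, hd1, hxd⟩ := hmem3 x hx.2
      have hle : 2 * x + 1 ≤ n + 1 := Nat.le_of_dvd (by omega) hdvd
      omega
    split_ifs with h
    · calc (F1 ∩ F3).card ≤ ({n / 2} : Finset ℕ).card := by
            apply Finset.card_le_card
            intro x hx
            rw [Finset.mem_singleton]
            exact (key x hx).1
        _ = 1 := Finset.card_singleton _
    · have hemp : F1 ∩ F3 = ∅ := by
        rw [Finset.eq_empty_iff_forall_notMem]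
        intro x hx
        exact h (key x hx).2
      rw [hemp, Finset.card_empty]
  have hi12 : (F1 ∩ F2).card ≤ if n % 3 = 2 then 1 else 0 := by
    have key : ∀ x ∈ F1 ∩ F2, x = 1 ∧ n % 3 = 2 := by
      intro x hx
      rw [Finset.mem_inter] at hx
      obtain ⟨hdvd1, hx1⟩ := hmem1 x hx.1
      obtain ⟨hdvd2, -⟩ := hmem2 x hx.2
      have h2 : (2 * x + 1) ∣ 2 * (n + 1) := Dvd.dvd.mul_left hdvd1 2
      have h3 : (2 * x + 1) ∣ (2 * (n + 1) - (2 * n - 1)) := Nat.dvd_sub h2 hdvd2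
      have he : 2 * (n + 1) - (2 * n - 1) = 3 := by omega
      rw [he] at h3
      have := Nat.le_of_dvd (by omega) h3
      have hx' : x = 1 := by omega
      subst hx'
      norm_num at hdvd2
      omega
    split_ifs with h
    · calc (F1 ∩ F2).card ≤ ({1} : Finset ℕ).card := by
            apply Finset.card_le_card
            intro x hx
            rw [Finset.mem_singleton]
            exact (key x hx).1
        _ = 1 := Finset.card_singleton _
    · have hemp : F1 ∩ F2 = ∅ := by
        rw [Finset.eq_empty_iff_forall_notMem]
        intro x hx
        exact h (key x hx).2
      rw [hemp, Finset.card_empty]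
  -- union bound
  have hUS : F1 ∪ F2 ∪ F3 ⊆ S := Finset.union_subset (Finset.union_subset h1S h2S) h3S
  have hcard1 : (F1 ∪ F2).card + (F1 ∩ F2).card = F1.card + F2.card :=
    Finset.card_union_add_card_inter F1 F2
  have hcard2 : (F1 ∪ F2 ∪ F3).card + ((F1 ∪ F2) ∩ F3).card = (F1 ∪ F2).card + F3.card :=
    Finset.card_union_add_card_inter _ _
  have hdistr : (F1 ∪ F2) ∩ F3 = (F1 ∩ F3) ∪ (F2 ∩ F3) := Finset.union_inter_distrib_right _ _ _
  have hcard3 : ((F1 ∪ F2) ∩ F3).card ≤ (F1 ∩ F3).card + (F2 ∩ F3).card := by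
    rw [hdistr]; exact Finset.card_union_le _ _
  have hSU : (F1 ∪ F2 ∪ F3).card ≤ S.card := Finset.card_le_card hUS
  -- positivity of divisor counts
  have hp1 : 1 ≤ n.divisors.card := Finset.card_pos.mpr ⟨n, Nat.mem_divisors_self n (by omega)⟩
  have hp2 : 1 ≤ (2 * n - 1).divisors.card :=
    Finset.card_pos.mpr ⟨1, Nat.one_mem_divisors.mpr (by omega)⟩
  have hp3 : 1 ≤ ((n + 1).divisors.filter (fun d => Odd d)).card := by
    apply Finset.card_pos.mpr
    exact ⟨1, by rw [Finset.mem_filter, Nat.mem_divisors]; exact ⟨⟨one_dvd _, by omega⟩, odd_one⟩⟩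
  rw [hA]
  split_ifs at hi13 hi12 ⊢ <;> push_cast <;> omega
end

section
/- For every n ≥ 1, the number of triples (x,y,z) of integers with x ≥ 0, y ≥ 1, z ≥ 1 satisfying n = 2xyz + yz + x + y equals a(n) − 1, where a(n) = 1 + #{x : 1 ≤ x ≤ n−1 and ∃ h ≥ 1 with h | x and (2x+1) | (2n−2h+1)}. -/
lemma keyUnique (k x r x' r' : ℕ) (hk : 0 < k) (hr : r < k) (hr' : r' < k)
    (h : r + x * k = r' + x' * k) : x = x' := by
  have h1 : (r + x * k) / k = x := by
    rw [Nat.add_mul_div_right _ _ hk, Nat.div_eq_of_lt hr, Nat.zero_add]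
  have h2 : (r' + x' * k) / k = x' := by
    rw [Nat.add_mul_div_right _ _ hk, Nat.div_eq_of_lt hr', Nat.zero_add]
  rw [h, h2] at h1
  exact h1.symm

theorem diophantine_count (n : ℕ) (hn : 1 ≤ n) :
    Nat.card {t : ℕ × ℕ × ℕ // 1 ≤ t.2.1 ∧ 1 ≤ t.2.2 ∧
      n = 2 * t.1 * t.2.1 * t.2.2 + t.2.1 * t.2.2 + t.1 + t.2.1} = A n - 1 := by
  classical
  set S := (Finset.Ioo 0 n).filter
    (fun x => ∃ h ∈ Finset.Icc 1 x, h ∣ x ∧ (2 * x + 1) ∣ (2 * n - 2 * h + 1)) with hSdef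
  have hA : A n - 1 = S.card := by
    have : A n = 1 + S.card := by
      unfold A
      rw [hSdef]
    omega
  rw [hA]
  have hmem : ∀ t : ℕ × ℕ × ℕ, (1 ≤ t.2.1 ∧ 1 ≤ t.2.2 ∧
      n = 2 * t.1 * t.2.1 * t.2.2 + t.2.1 * t.2.2 + t.1 + t.2.1) → t.2.1 * t.2.2 ∈ S := by
    rintro ⟨x, y, z⟩ ⟨hy, hz, heq⟩
    simp only at hy hz heq ⊢
    obtain ⟨X, hX⟩ : ∃ X, y * z = X := ⟨_, rfl⟩
    have key : (2 * X + 1) * (2 * x + 1) + 2 * y = 2 * n + 1 := by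
      rw [heq, ← hX]; ring
    obtain ⟨M, hM⟩ : ∃ M, (2 * X + 1) * (2 * x + 1) = M := ⟨_, rfl⟩
    rw [hM] at key
    have hM1 : 2 * X + 1 ≤ M := by
      rw [← hM]; exact Nat.le_mul_of_pos_right _ (by omega)
    have hyX : y ≤ X := by rw [← hX]; exact Nat.le_mul_of_pos_right _ hz
    simp only [hSdef, Finset.mem_filter, Finset.mem_Ioo]
    rw [hX]
    refine ⟨⟨by omega, by omega⟩, y, Finset.mem_Icc.mpr ⟨hy, hyX⟩, ⟨z, hX.symm⟩, ?_⟩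
    refine ⟨2 * x + 1, ?_⟩
    rw [hM]
    omega
  let f : {t : ℕ × ℕ × ℕ // 1 ≤ t.2.1 ∧ 1 ≤ t.2.2 ∧
      n = 2 * t.1 * t.2.1 * t.2.2 + t.2.1 * t.2.2 + t.1 + t.2.1} → {x // x ∈ S} :=
    fun t => ⟨t.1.2.1 * t.1.2.2, hmem t.1 t.2⟩
  have hbij : Function.Bijective f := by
    constructor
    · rintro ⟨⟨x, y, z⟩, hy, hz, heq⟩ ⟨⟨x', y', z'⟩, hy', hz', heq'⟩ hfeq
      simp only [f, Subtype.mk.injEq] at hfeq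
      simp only at hy hz heq hy' hz' heq'
      have e1 : n = 2 * x * (y * z) + (y * z) + x + y := by rw [heq]; ring
      have e1' : n = 2 * x' * (y' * z') + (y' * z') + x' + y' := by rw [heq']; ring
      rw [← hfeq] at e1'
      obtain ⟨X, hX⟩ : ∃ X, y * z = X := ⟨_, rfl⟩
      rw [hX] at e1 e1' hfeq
      have hyX : y ≤ X := by rw [← hX]; exact Nat.le_mul_of_pos_right _ hz
      have hy'X : y' ≤ X := by rw [hfeq]; exact Nat.le_mul_of_pos_right _ hz'
      have hxk : x * (2 * X + 1) = 2 * x * X + x := by ring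
      have hxk' : x' * (2 * X + 1) = 2 * x' * X + x' := by ring
      obtain ⟨B, hB⟩ : ∃ B, 2 * x * X = B := ⟨_, rfl⟩
      obtain ⟨B', hB'⟩ : ∃ B', 2 * x' * X = B' := ⟨_, rfl⟩
      rw [hB] at e1 hxk
      rw [hB'] at e1' hxk'
      have hxx : x = x' := by
        refine keyUnique (2 * X + 1) x (y - 1) x' (y' - 1) (by omega) (by omega) (by omega) ?_
        rw [hxk, hxk']
        omega
      subst hxx
      have hBB : B = B' := by rw [← hB, ← hB']
      have hyy : y = y' := by omega
      subst hyy
      have hzz : z = z' := by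
        have : y * z = y * z' := by rw [hX, hfeq]
        exact Nat.eq_of_mul_eq_mul_left (by omega) this
      subst hzz
      rfl
    · rintro ⟨X, hXS⟩
      simp only [hSdef, Finset.mem_filter, Finset.mem_Ioo] at hXS
      obtain ⟨⟨hX0, hXn⟩, h, hhIcc, hhdvd, hdvd⟩ := hXS
      rw [Finset.mem_Icc] at hhIcc
      obtain ⟨q, hq⟩ := hdvd
      have hodd : Odd ((2 * X + 1) * q) := by rw [← hq, Nat.odd_iff]; omega
      have hqodd : Odd q := (Nat.odd_mul.mp hodd).2
      obtain ⟨m, hm⟩ := hqodd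
      have hm' : q = 2 * m + 1 := by omega
      have hcan : h * (X / h) = X := Nat.mul_div_cancel' hhdvd
      have hzpos : 0 < X / h := Nat.div_pos hhIcc.2 (by omega)
      refine ⟨⟨(m, h, X / h), ?_, ?_, ?_⟩, ?_⟩
      · exact hhIcc.1
      · exact hzpos
      · show n = 2 * m * h * (X / h) + h * (X / h) + m + h
        rw [mul_assoc (2 * m), hcan]
        have e3 : 2 * n - 2 * h + 1 = 2 * (2 * m * X) + 2 * X + 2 * m + 1 := by
          rw [hq, hm']; ring
        obtain ⟨K, hK⟩ : ∃ K, 2 * m * X = K := ⟨_, rfl⟩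
        rw [hK] at e3 ⊢
        have hhn : h < n := lt_of_le_of_lt hhIcc.2 hXn
        omega
      · simp only [f]
        exact Subtype.ext hcan
  rw [Nat.card_congr (Equiv.ofBijective f hbij)]
  exact Nat.card_eq_finsetCard S
end

section
/- For every quadruple (k,d,i,j) of natural numbers with k ≥ 1 and d ≥ 1, the pair (kd + id + j(i+1)(2(k−1)d+1), d + j(2(k−1)d+1)) is reachable from (1,1) under the maps Ĝ(x,y)=(x+y,y) and Ŝ(x,y)=(3x−2y+1,2x−y+1). -/
lemma reach_G {p : ℤ × ℤ} (h : Reachable p) : Reachable (Ghat p) := by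
  obtain ⟨w, hw⟩ := h
  exact ⟨false :: w, by simp [applyWord, List.foldr] at hw ⊢; rw [hw]⟩

lemma reach_S {p : ℤ × ℤ} (h : Reachable p) : Reachable (Shat p) := by
  obtain ⟨w, hw⟩ := h
  exact ⟨true :: w, by simp [applyWord, List.foldr] at hw ⊢; rw [hw]⟩

lemma reach_G_iter {p : ℤ × ℤ} (h : Reachable p) (n : ℕ) : Reachable (Ghat^[n] p) := by
  induction n with
  | zero => simpa using h
  | succ n ih => rw [Function.iterate_succ_apply']; exact reach_G ih

lemma reach_S_iter {p : ℤ × ℤ} (h : Reachable p) (n : ℕ) : Reachable (Shat^[n] p) := by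
  induction n with
  | zero => simpa using h
  | succ n ih => rw [Function.iterate_succ_apply']; exact reach_S ih

lemma ghat_iter (n : ℕ) (p : ℤ × ℤ) : Ghat^[n] p = (p.1 + n * p.2, p.2) := by
  induction n with
  | zero => simp
  | succ n ih =>
    rw [Function.iterate_succ_apply', ih]
    simp [Ghat]
    ring

lemma shat_iter (n : ℕ) (p : ℤ × ℤ) :
    Shat^[n] p = (p.1 + n * (2 * (p.1 - p.2) + 1), p.2 + n * (2 * (p.1 - p.2) + 1)) := by
  induction n with
  | zero => simp
  | succ n ih =>
    rw [Function.iterate_succ_apply', ih]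
    simp [Shat, Prod.ext_iff]
    constructor <;> ring

theorem quadruple_reachable (k d i j : ℤ) (hk : 1 ≤ k) (hd : 1 ≤ d)
    (hi : 0 ≤ i) (hj : 0 ≤ j) :
    Reachable (k * d + i * d + j * (i + 1) * (2 * (k - 1) * d + 1),
               d + j * (2 * (k - 1) * d + 1)) := by
  have h0 : Reachable (1, 1) := ⟨[], rfl⟩
  have h := reach_G_iter (reach_S_iter (reach_G_iter (reach_S_iter h0 (d - 1).toNat)
      (k - 1).toNat) j.toNat) i.toNat
  have hD : ((d - 1).toNat : ℤ) = d - 1 := Int.toNat_of_nonneg (by omega)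
  have hK : ((k - 1).toNat : ℤ) = k - 1 := Int.toNat_of_nonneg (by omega)
  have hJ : (j.toNat : ℤ) = j := Int.toNat_of_nonneg hj
  have hI : (i.toNat : ℤ) = i := Int.toNat_of_nonneg hi
  rw [shat_iter, ghat_iter, shat_iter, ghat_iter] at h
  simp only [hD, hK, hJ, hI] at h
  convert h using 2 <;> ring
end

section
/- For every natural number t ≥ 0, both (3t+2, 2t+2) and (5t+4, 2t+2) are reachable from (1,1) under the maps Ĝ(x,y)=(x+y,y) and Ŝ(x,y)=(3x−2y+1,2x−y+1). -/
lemma applyWord_replicate_false (n : ℕ) :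
    applyWord (List.replicate n false) (1, 1) = ((n : ℤ) + 1, 1) := by
  induction n with
  | zero => simp [applyWord]
  | succ k ih =>
    rw [List.replicate_succ]
    show Ghat (applyWord (List.replicate k false) (1, 1)) = _
    rw [ih]
    simp [Ghat]

theorem reachable_3t2_5t4 (t : ℤ) (ht : 0 ≤ t) :
    Reachable (3 * t + 2, 2 * t + 2) ∧ Reachable (5 * t + 4, 2 * t + 2) := by
  obtain ⟨n, rfl⟩ := Int.eq_ofNat_of_zero_le ht
  have h1 : applyWord (true :: List.replicate n false) (1, 1)
      = (3 * (n : ℤ) + 2, 2 * (n : ℤ) + 2) := by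
    show Shat (applyWord (List.replicate n false) (1, 1)) = _
    rw [applyWord_replicate_false]
    simp [Shat]
    constructor <;> ring
  refine ⟨⟨_, h1⟩, ⟨false :: true :: List.replicate n false, ?_⟩⟩
  show Ghat (applyWord (true :: List.replicate n false) (1, 1)) = _
  rw [h1]
  simp [Ghat]
  ring
end
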